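/- Correspondence between symbolic and concrete progression: for relations R, R' between the state sets of two symbolic GKAT automata, R symbolically progresses to R' if and only if R progresses to R' on the concretizations. -/

import Mathlib

/-- Result of a GKAT automaton transition on an atom. -/
inductive GRes (S A : Type) where
  | reject : GRes S A
  | accept : GRes S A
  | step : S → A → GRes S A

/-- Boolean expressions over primitive tests `T`. -/
inductive BExp (T : Type) where
  | zero : BExp T
  | one : BExp T
  | test : T → BExp T
  | and : BExp T → BExp T → BExp T
  | or : BExp T → BExp T → BExp T
  | not : BExp T → BExp T

/-- Evaluation of a Boolean expression under an atom (truth assignment) `α`. -/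
def BExp.eval {T : Type} (α : T → Bool) : BExp T → Bool
  | BExp.zero => false
  | BExp.one => true
  | BExp.test t => α t
  | BExp.and a b => a.eval α && b.eval α
  | BExp.or a b => a.eval α || b.eval α
  | BExp.not a => !a.eval α

/-- The concretization relation of a symbolic GKAT automaton `(ε, δ)`: the state
`s` on atom `α` accepts if some guard in `ε s` is satisfied, transitions according
to a satisfied guard in `δ s`, and rejects otherwise. -/
def ConcRel {T S A : Type} (ε : S → Set (BExp T)) (δ : S → Set (BExp T × S × A))
    (s : S) (α : T → Bool) : GRes S A → Prop
  | GRes.accept => ∃ b ∈ ε s, BExp.eval α b = true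
  | GRes.step s' p => ∃ b, (b, s', p) ∈ δ s ∧ BExp.eval α b = true
  | GRes.reject => (∀ b ∈ ε s, BExp.eval α b = false) ∧
      (∀ x ∈ δ s, BExp.eval α x.1 = false)

open Classical in
/-- The concretization of a symbolic GKAT automaton as a transition function. -/
noncomputable def conc {T S A : Type} (ε : S → Set (BExp T))
    (δ : S → Set (BExp T × S × A)) (s : S) (α : T → Bool) : GRes S A :=
  if _ : ∃ b ∈ ε s, BExp.eval α b = true then GRes.accept
  else if h : ∃ x ∈ δ s, BExp.eval α x.1 = true then
    GRes.step h.choose.2.1 h.choose.2.2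
  else GRes.reject

/-- The atom `α` satisfies the rejection condition `ρ(s)` of a symbolic state:
all guards in `ε s` and `δ s` evaluate to false. -/
def Rejects {T S A : Type} (ε : S → Set (BExp T)) (δ : S → Set (BExp T × S × A))
    (s : S) (α : T → Bool) : Prop :=
  (∀ b ∈ ε s, BExp.eval α b = false) ∧ (∀ x ∈ δ s, BExp.eval α x.1 = false)

/-- Symbolic progression between two symbolic GKAT automata with predicate `P`. -/
def SymbProgress {T S U A : Type}
    (ε₁ : S → Set (BExp T)) (δ₁ : S → Set (BExp T × S × A))
    (ε₂ : U → Set (BExp T)) (δ₂ : U → Set (BExp T × U × A))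
    (P : S ⊕ U → Prop) (R R' : S → U → Prop) : Prop :=
  ∀ s u, R s u →
    (∀ α : T → Bool, (∃ b ∈ ε₁ s, BExp.eval α b = true) ↔
      (∃ a ∈ ε₂ u, BExp.eval α a = true)) ∧
    (∀ b s' p, (b, s', p) ∈ δ₁ s →
      (∃ α, BExp.eval α b = true ∧ Rejects ε₂ δ₂ u α) → P (Sum.inl s')) ∧
    (∀ a u' q, (a, u', q) ∈ δ₂ u →
      (∃ α, BExp.eval α a = true ∧ Rejects ε₁ δ₁ s α) → P (Sum.inr u')) ∧
    (∀ b s' p a u' q, (b, s', p) ∈ δ₁ s → (a, u', q) ∈ δ₂ u →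
      (∃ α, BExp.eval α b = true ∧ BExp.eval α a = true) → p ≠ q →
      P (Sum.inl s') ∧ P (Sum.inr u')) ∧
    (∀ b s' a u' p, (b, s', p) ∈ δ₁ s → (a, u', p) ∈ δ₂ u →
      (∃ α, BExp.eval α b = true ∧ BExp.eval α a = true) → R' s' u')

/-- Atom-wise (concrete) progression between two GKAT automata. -/
def Progress {S U At A : Type} (ζ₁ : S → At → GRes S A) (ζ₂ : U → At → GRes U A)
    (P : S ⊕ U → Prop) (R R' : S → U → Prop) : Prop :=
  ∀ s u, R s u → ∀ α,
    ((ζ₁ s α = GRes.accept) ↔ (ζ₂ u α = GRes.accept)) ∧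
    (∀ s' p, ζ₁ s α = GRes.step s' p → ζ₂ u α = GRes.reject → P (Sum.inl s')) ∧
    (∀ u' p, ζ₂ u α = GRes.step u' p → ζ₁ s α = GRes.reject → P (Sum.inr u')) ∧
    (∀ s' p u' q, ζ₁ s α = GRes.step s' p → ζ₂ u α = GRes.step u' q → p ≠ q →
      P (Sum.inl s') ∧ P (Sum.inr u')) ∧
    (∀ s' u' p, ζ₁ s α = GRes.step s' p → ζ₂ u α = GRes.step u' p → R' s' u')

theorem conc_accept_iff {T S A : Type} (ε : S → Set (BExp T))
    (δ : S → Set (BExp T × S × A)) (s : S) (α : T → Bool) :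
    conc ε δ s α = GRes.accept ↔ ∃ b ∈ ε s, BExp.eval α b = true := by
  unfold conc
  split
  · simp_all
  · split <;> simp_all

theorem conc_reject_iff {T S A : Type} (ε : S → Set (BExp T))
    (δ : S → Set (BExp T × S × A)) (s : S) (α : T → Bool) :
    conc ε δ s α = GRes.reject ↔ Rejects ε δ s α := by
  unfold conc Rejects
  split
  · rename_i h
    apply iff_of_false (fun hh => nomatch hh)
    intro ⟨h1, _⟩
    obtain ⟨b, hb, he⟩ := h
    exact absurd (h1 b hb) (by simp [he])
  · split
    · rename_i _ h
      apply iff_of_false (fun hh => nomatch hh)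
      intro ⟨_, h2⟩
      obtain ⟨x, hx, he⟩ := h
      exact absurd (h2 x hx) (by simp [he])
    · rename_i h1 h2
      apply iff_of_true rfl
      push_neg at h1 h2
      constructor
      · intro b hb; simpa using h1 b hb
      · intro x hx; simpa using h2 x hx

theorem conc_step_elim {T S A : Type} (ε : S → Set (BExp T))
    (δ : S → Set (BExp T × S × A)) (s : S) (α : T → Bool) (s' : S) (p : A) :
    conc ε δ s α = GRes.step s' p →
      ∃ b, (b, s', p) ∈ δ s ∧ BExp.eval α b = true := by
  unfold conc
  split
  · intro h; exact (nomatch h)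
  · split
    · rename_i _ h
      intro heq
      obtain ⟨hs', hp⟩ : h.choose.2.1 = s' ∧ h.choose.2.2 = p := by
        cases heq; exact ⟨rfl, rfl⟩
      refine ⟨h.choose.1, ?_, h.choose_spec.2⟩
      have := h.choose_spec.1
      rw [← hs', ← hp]
      exact this
    · intro h; exact (nomatch h)

theorem conc_step_intro {T S A : Type} (ε : S → Set (BExp T))
    (δ : S → Set (BExp T × S × A))
    (hδδ : ∀ s, ∀ x ∈ δ s, ∀ y ∈ δ s, x ≠ y →
      ∀ α, ¬(BExp.eval α x.1 = true ∧ BExp.eval α y.1 = true))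
    (s : S) (α : T → Bool) (b : BExp T) (s' : S) (p : A)
    (hb : (b, s', p) ∈ δ s) (he : BExp.eval α b = true)
    (hna : ¬ ∃ c ∈ ε s, BExp.eval α c = true) :
    conc ε δ s α = GRes.step s' p := by
  unfold conc
  rw [dif_neg hna]
  have h : ∃ x ∈ δ s, BExp.eval α x.1 = true := ⟨(b, s', p), hb, he⟩
  rw [dif_pos h]
  have hc : h.choose = (b, s', p) := by
    by_contra hne
    exact hδδ s h.choose h.choose_spec.1 (b, s', p) hb hne α ⟨h.choose_spec.2, he⟩
  rw [hc]

/-- correspondence between symbolic and concrete progression: for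
relations between the state sets of two symbolic GKAT automata (satisfying the
disjointedness condition), `R` symbolically progresses to `R'` iff `R`
progresses to `R'` on the concretizations. -/
theorem symbProgress_iff_progress {T S U A : Type}
    (ε₁ : S → Set (BExp T)) (δ₁ : S → Set (BExp T × S × A))
    (ε₂ : U → Set (BExp T)) (δ₂ : U → Set (BExp T × U × A))
    (h₁εε : ∀ s, ∀ b₁ ∈ ε₁ s, ∀ b₂ ∈ ε₁ s, b₁ ≠ b₂ →
      ∀ α, ¬(BExp.eval α b₁ = true ∧ BExp.eval α b₂ = true))
    (h₁εδ : ∀ s, ∀ b ∈ ε₁ s, ∀ x ∈ δ₁ s,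
      ∀ α, ¬(BExp.eval α b = true ∧ BExp.eval α x.1 = true))
    (h₁δδ : ∀ s, ∀ x ∈ δ₁ s, ∀ y ∈ δ₁ s, x ≠ y →
      ∀ α, ¬(BExp.eval α x.1 = true ∧ BExp.eval α y.1 = true))
    (h₂εε : ∀ u, ∀ b₁ ∈ ε₂ u, ∀ b₂ ∈ ε₂ u, b₁ ≠ b₂ →
      ∀ α, ¬(BExp.eval α b₁ = true ∧ BExp.eval α b₂ = true))
    (h₂εδ : ∀ u, ∀ b ∈ ε₂ u, ∀ x ∈ δ₂ u,
      ∀ α, ¬(BExp.eval α b = true ∧ BExp.eval α x.1 = true))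
    (h₂δδ : ∀ u, ∀ x ∈ δ₂ u, ∀ y ∈ δ₂ u, x ≠ y →
      ∀ α, ¬(BExp.eval α x.1 = true ∧ BExp.eval α y.1 = true))
    (P : S ⊕ U → Prop) (R R' : S → U → Prop) :
    SymbProgress ε₁ δ₁ ε₂ δ₂ P R R' ↔
      Progress (conc ε₁ δ₁) (conc ε₂ δ₂) P R R' := by
  constructor
  · -- symbolic → concrete
    intro H s u hR α
    obtain ⟨hε, h2, h3, h4, h5⟩ := H s u hR
    refine ⟨?_, ?_, ?_, ?_, ?_⟩
    · rw [conc_accept_iff, conc_accept_iff]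
      exact hε α
    · intro s' p hstep hrej
      obtain ⟨b, hb, he⟩ := conc_step_elim _ _ _ _ _ _ hstep
      exact h2 b s' p hb ⟨α, he, (conc_reject_iff _ _ _ _).mp hrej⟩
    · intro u' q hstep hrej
      obtain ⟨a, ha, hea⟩ := conc_step_elim _ _ _ _ _ _ hstep
      exact h3 a u' q ha ⟨α, hea, (conc_reject_iff _ _ _ _).mp hrej⟩
    · intro s' p u' q hs1 hs2 hpq
      obtain ⟨b, hb, he⟩ := conc_step_elim _ _ _ _ _ _ hs1
      obtain ⟨a, ha, hea⟩ := conc_step_elim _ _ _ _ _ _ hs2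
      exact h4 b s' p a u' q hb ha ⟨α, he, hea⟩ hpq
    · intro s' u' p hs1 hs2
      obtain ⟨b, hb, he⟩ := conc_step_elim _ _ _ _ _ _ hs1
      obtain ⟨a, ha, hea⟩ := conc_step_elim _ _ _ _ _ _ hs2
      exact h5 b s' a u' p hb ha ⟨α, he, hea⟩
  · -- concrete → symbolic
    intro H s u hR
    refine ⟨?_, ?_, ?_, ?_, ?_⟩
    · intro α
      rw [← conc_accept_iff ε₁ δ₁, ← conc_accept_iff ε₂ δ₂]
      exact (H s u hR α).1
    · intro b s' p hb ⟨α, he, hrej⟩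
      have hna : ¬ ∃ c ∈ ε₁ s, BExp.eval α c = true := by
        rintro ⟨c, hc, hec⟩
        exact h₁εδ s c hc (b, s', p) hb α ⟨hec, he⟩
      have hs1 := conc_step_intro ε₁ δ₁ h₁δδ s α b s' p hb he hna
      have hs2 := (conc_reject_iff ε₂ δ₂ u α).mpr hrej
      exact (H s u hR α).2.1 s' p hs1 hs2
    · intro a u' q ha ⟨α, hea, hrej⟩
      have hna : ¬ ∃ c ∈ ε₂ u, BExp.eval α c = true := by
        rintro ⟨c, hc, hec⟩
        exact h₂εδ u c hc (a, u', q) ha α ⟨hec, hea⟩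
      have hs2 := conc_step_intro ε₂ δ₂ h₂δδ u α a u' q ha hea hna
      have hs1 := (conc_reject_iff ε₁ δ₁ s α).mpr hrej
      exact (H s u hR α).2.2.1 u' q hs2 hs1
    · intro b s' p a u' q hb ha ⟨α, he, hea⟩ hpq
      have hna1 : ¬ ∃ c ∈ ε₁ s, BExp.eval α c = true := by
        rintro ⟨c, hc, hec⟩
        exact h₁εδ s c hc (b, s', p) hb α ⟨hec, he⟩
      have hna2 : ¬ ∃ c ∈ ε₂ u, BExp.eval α c = true := by
        rintro ⟨c, hc, hec⟩
        exact h₂εδ u c hc (a, u', q) ha α ⟨hec, hea⟩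
      have hs1 := conc_step_intro ε₁ δ₁ h₁δδ s α b s' p hb he hna1
      have hs2 := conc_step_intro ε₂ δ₂ h₂δδ u α a u' q ha hea hna2
      exact (H s u hR α).2.2.2.1 s' p u' q hs1 hs2 hpq
    · intro b s' a u' p hb ha ⟨α, he, hea⟩
      have hna1 : ¬ ∃ c ∈ ε₁ s, BExp.eval α c = true := by
        rintro ⟨c, hc, hec⟩
        exact h₁εδ s c hc (b, s', p) hb α ⟨hec, he⟩
      have hna2 : ¬ ∃ c ∈ ε₂ u, BExp.eval α c = true := by
        rintro ⟨c, hc, hec⟩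
        exact h₂εδ u c hc (a, u', p) ha α ⟨hec, hea⟩
      have hs1 := conc_step_intro ε₁ δ₁ h₁δδ s α b s' p hb he hna1
      have hs2 := conc_step_intro ε₂ δ₂ h₂δδ u α a u' p ha hea hna2
      exact (H s u hR α).2.2.2.2 s' u' p hs1 hs2
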